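/- A formula φ in negation normal form is satisfiable if and only if there exists a Hintikka structure for φ. -/

import Mathlib

mutual
inductive Fml : Type where
  | var : ℕ → Fml
  | neg : Fml → Fml
  | and : Fml → Fml → Fml
  | or : Fml → Fml → Fml
  | dia : Prog → Fml → Fml
  | box : Prog → Fml → Fml
  deriving DecidableEq
inductive Prog : Type where
  | atom : ℕ → Prog
  | conv : ℕ → Prog
  | seq : Prog → Prog → Prog
  | choice : Prog → Prog → Prog
  | star : Prog → Prog
  | test : Fml → Prog
  deriving DecidableEq
end

structure Model (W : Type) where
  R : ℕ → W → W → Prop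
  V : ℕ → W → Prop

mutual
def Sat {W : Type} (M : Model W) : W → Fml → Prop
  | w, .var p => M.V p w
  | w, .neg φ => ¬ Sat M w φ
  | w, .and φ ψ => Sat M w φ ∧ Sat M w ψ
  | w, .or φ ψ => Sat M w φ ∨ Sat M w ψ
  | w, .dia γ φ => ∃ v, PRel M γ w v ∧ Sat M v φ
  | w, .box γ φ => ∀ v, PRel M γ w v → Sat M v φ
def PRel {W : Type} (M : Model W) : Prog → W → W → Prop
  | .atom a, w, v => M.R a w v
  | .conv a, w, v => M.R a v w
  | .seq γ δ, w, v => ∃ u, PRel M γ w u ∧ PRel M δ u v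
  | .choice γ δ, w, v => PRel M γ w v ∨ PRel M δ w v
  | .star γ, w, v => Relation.ReflTransGen (fun a b => PRel M γ a b) w v
  | .test φ, w, v => w = v ∧ Sat M w φ
end
mutual
def IsNNF : Fml → Prop
  | .var _ => True
  | .neg (.var _) => True
  | .neg _ => False
  | .and φ ψ => IsNNF φ ∧ IsNNF ψ
  | .or φ ψ => IsNNF φ ∧ IsNNF ψ
  | .dia γ φ => IsNNFP γ ∧ IsNNF φ
  | .box γ φ => IsNNFP γ ∧ IsNNF φ
def IsNNFP : Prog → Prop
  | .atom _ => True
  | .conv _ => True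
  | .seq γ δ => IsNNFP γ ∧ IsNNFP δ
  | .choice γ δ => IsNNFP γ ∧ IsNNFP δ
  | .star γ => IsNNFP γ
  | .test φ => IsNNF φ
end

mutual
/-- `nnf φ` is the negation normal form of `φ`. -/
def nnf : Fml → Fml
  | .var p => .var p
  | .neg φ => nnfNeg φ
  | .and φ ψ => .and (nnf φ) (nnf ψ)
  | .or φ ψ => .or (nnf φ) (nnf ψ)
  | .dia γ φ => .dia γ (nnf φ)
  | .box γ φ => .box γ (nnf φ)
/-- `nnfNeg φ = nnf (¬ φ)`, written `∼φ`. -/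
def nnfNeg : Fml → Fml
  | .var p => .neg (.var p)
  | .neg φ => nnf φ
  | .and φ ψ => .or (nnfNeg φ) (nnfNeg ψ)
  | .or φ ψ => .and (nnfNeg φ) (nnfNeg ψ)
  | .dia γ φ => .box γ (nnfNeg φ)
  | .box γ φ => .dia γ (nnfNeg φ)
end

/-- Literal programs: atomic programs or converses of atomic programs. -/
inductive Lit : Type where
  | atom : ℕ → Lit
  | conv : ℕ → Lit
  deriving DecidableEq

def Lit.toProg : Lit → Prog
  | .atom a => .atom a
  | .conv a => .conv a

/-- The converse `l⁻` of a literal program. -/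
def Lit.inv : Lit → Lit
  | .atom a => .conv a
  | .conv a => .atom a

/-- The reduction relation `⤳` on ⟨·⟩-formulae. -/
inductive Red : Fml → Fml → Prop where
  | seq (γ δ χ) : Red (.dia (.seq γ δ) χ) (.dia γ (.dia δ χ))
  | choiceL (γ δ χ) : Red (.dia (.choice γ δ) χ) (.dia γ χ)
  | choiceR (γ δ χ) : Red (.dia (.choice γ δ) χ) (.dia δ χ)
  | star1 (γ χ) : Red (.dia (.star γ) χ) χ
  | star2 (γ χ) : Red (.dia (.star γ) χ) (.dia γ (.dia (.star γ) χ))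
  | test (ϕ χ) : Red (.dia (.test ϕ) χ) χ

/-- `InPre ψ φ` means `φ ∈ pre(ψ)`, i.e. `φ = ⟨γ₁⟩…⟨γ_k⟩ψ`. -/
inductive InPre (ψ : Fml) : Fml → Prop where
  | base : InPre ψ ψ
  | step (γ φ) : InPre ψ φ → InPre ψ (.dia γ φ)

/-- `φ` is an eventuality: `φ = ⟨γ₁⟩…⟨γ_k⟩⟨γ*⟩ψ`. -/
def IsEv (φ : Fml) : Prop := ∃ γ ψ, InPre (.dia (.star γ) ψ) φ

mutual
/-- Size of formulas. -/
def fsize : Fml → ℕ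
  | .var _ => 1
  | .neg (.var _) => 1
  | .neg φ => 1 + fsize φ
  | .and φ ψ => 1 + fsize φ + fsize ψ
  | .or φ ψ => 1 + fsize φ + fsize ψ
  | .dia γ φ => psize γ + fsize φ
  | .box γ φ => psize γ + fsize φ
/-- Size of programs. -/
def psize : Prog → ℕ
  | .atom _ => 1
  | .conv _ => 1
  | .seq γ δ => 1 + psize γ + psize δ
  | .choice γ δ => 1 + psize γ + psize δ
  | .star γ => 1 + psize γ
  | .test φ => 1 + fsize φ
end
/-- One decomposition step generating the closure `cl(φ)`. -/
inductive ClStep : Fml → Fml → Prop where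
  | diaLit (l : Lit) (ψ) : ClStep (.dia l.toProg ψ) ψ
  | boxLit (l : Lit) (ψ) : ClStep (.box l.toProg ψ) ψ
  | andL (φ ψ) : ClStep (.and φ ψ) φ
  | andR (φ ψ) : ClStep (.and φ ψ) ψ
  | orL (φ ψ) : ClStep (.or φ ψ) φ
  | orR (φ ψ) : ClStep (.or φ ψ) ψ
  | boxChoiceL (γ δ φ) : ClStep (.box (.choice γ δ) φ) (.box γ φ)
  | boxChoiceR (γ δ φ) : ClStep (.box (.choice γ δ) φ) (.box δ φ)
  | boxStar1 (γ φ) : ClStep (.box (.star γ) φ) φ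
  | boxStar2 (γ φ) : ClStep (.box (.star γ) φ) (.box γ (.box (.star γ) φ))
  | diaTest1 (ψ φ) : ClStep (.dia (.test ψ) φ) φ
  | diaTest2 (ψ φ) : ClStep (.dia (.test ψ) φ) ψ
  | diaSeq (γ δ φ) : ClStep (.dia (.seq γ δ) φ) (.dia γ (.dia δ φ))
  | boxSeq (γ δ φ) : ClStep (.box (.seq γ δ) φ) (.box γ (.box δ φ))
  | diaChoiceL (γ δ φ) : ClStep (.dia (.choice γ δ) φ) (.dia γ φ)
  | diaChoiceR (γ δ φ) : ClStep (.dia (.choice γ δ) φ) (.dia δ φ)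
  | diaStar1 (γ φ) : ClStep (.dia (.star γ) φ) φ
  | diaStar2 (γ φ) : ClStep (.dia (.star γ) φ) (.dia γ (.dia (.star γ) φ))
  | boxTest1 (ψ φ) : ClStep (.box (.test ψ) φ) φ
  | boxTest2 (ψ φ) : ClStep (.box (.test ψ) φ) (nnfNeg ψ)

/-- The closure `cl(φ)`: the least set containing `φ` and closed under `ClStep`. -/
def Cl (φ : Fml) : Set Fml := {ψ | Relation.ReflTransGen ClStep φ ψ}

/-- A single step of a (model) chain: a literal-program diamond is instantiated,
otherwise a `⤳`-reduction happens at the same world. -/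
def ChainStep {W : Type} (M : Model W) : (W × Fml) → (W × Fml) → Prop
  | (w, .dia (.atom a) χ), (w', χ') => χ' = χ ∧ M.R a w w'
  | (w, .dia (.conv a) χ), (w', χ') => χ' = χ ∧ M.R a w' w
  | (w, χ), (w', χ') => Red χ χ' ∧ w' = w

/-- `σ` is a model chain for `(M, w, φ, ψ)`. -/
def ModelChain {W : Type} (M : Model W) (w : W) (φ ψ : Fml) (σ : List (W × Fml)) : Prop :=
  ∃ h : σ ≠ [], σ.head h = (w, φ) ∧ (σ.getLast h).2 = ψ ∧
    (∀ p ∈ σ, Sat M p.1 p.2) ∧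
    ∀ i, (h1 : i + 1 < σ.length) →
      ChainStep M (σ.get ⟨i, by omega⟩) (σ.get ⟨i + 1, h1⟩)

open Classical in
/-- `ex φ`: the largest non-eventuality `ψ` with `φ ∈ pre(ψ)`. -/
noncomputable def ex : Fml → Fml
  | .dia γ ψ => if IsEv (.dia γ ψ) then ex ψ else .dia γ ψ
  | φ => φ

mutual
/-- `SubF χ φ`: `χ` is a subformula of the formula `φ`. -/
inductive SubF : Fml → Fml → Prop where
  | refl (φ) : SubF φ φ
  | neg {χ φ} : SubF χ φ → SubF χ (.neg φ)
  | andL {χ φ ψ} : SubF χ φ → SubF χ (.and φ ψ)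
  | andR {χ φ ψ} : SubF χ ψ → SubF χ (.and φ ψ)
  | orL {χ φ ψ} : SubF χ φ → SubF χ (.or φ ψ)
  | orR {χ φ ψ} : SubF χ ψ → SubF χ (.or φ ψ)
  | diaF {χ γ φ} : SubF χ φ → SubF χ (.dia γ φ)
  | diaP {χ γ φ} : SubP χ γ → SubF χ (.dia γ φ)
  | boxF {χ γ φ} : SubF χ φ → SubF χ (.box γ φ)
  | boxP {χ γ φ} : SubP χ γ → SubF χ (.box γ φ)
/-- `SubP χ γ`: `χ` is a subformula of the program `γ`. -/
inductive SubP : Fml → Prog → Prop where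
  | seqL {χ γ δ} : SubP χ γ → SubP χ (.seq γ δ)
  | seqR {χ γ δ} : SubP χ δ → SubP χ (.seq γ δ)
  | choiceL {χ γ δ} : SubP χ γ → SubP χ (.choice γ δ)
  | choiceR {χ γ δ} : SubP χ δ → SubP χ (.choice γ δ)
  | star {χ γ} : SubP χ γ → SubP χ (.star γ)
  | test {χ φ} : SubF χ φ → SubP χ (.test φ)
end
/-- `ann` is an annotation for `Γ`: it maps some eventualities `φ ∈ Γ`
to a formula `ann φ ∈ Γ` with `φ ⤳ ann φ`. -/
def IsAnnotation (Γ : Set Fml) (ann : Fml → Option Fml) : Prop :=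
  ∀ φ φ', ann φ = some φ' → φ ∈ Γ ∧ IsEv φ ∧ φ' ∈ Γ ∧ Red φ φ'

/-- `ann` is full on `Γ`: it is defined on all eventualities of `Γ`. -/
def FullAnn (Γ : Set Fml) (ann : Fml → Option Fml) : Prop :=
  ∀ φ ∈ Γ, IsEv φ → (ann φ).isSome

/-- `ann` is non-cyclic: there is no cycle `φ₀, …, φ_n` with `ann φ_i = φ_{i+1 mod n+1}`. -/
def NonCyclic (ann : Fml → Option Fml) : Prop :=
  ¬ ∃ (n : ℕ) (f : ℕ → Fml), (∀ i < n, ann (f i) = some (f (i + 1))) ∧ ann (f n) = some (f 0)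

/-- One step of iterating an annotation (identity where undefined). -/
def annStep (ann : Fml → Option Fml) (φ : Fml) : Fml := (ann φ).getD φ

/-- The pure-formula version of a chain step:
if `χ = ⟨l⟩χ₀` for a literal program `l` then `χ' = χ₀`, else `χ ⤳ χ'`. -/
def FStep : Fml → Fml → Prop
  | .dia (.atom _) χ, χ' => χ' = χ
  | .dia (.conv _) χ, χ' => χ' = χ
  | χ, χ' => Red χ χ'

mutual
/-- The atomic program `d` occurs in a formula. -/
def OccursF (d : ℕ) : Fml → Prop
  | .var _ => False
  | .neg φ => OccursF d φ
  | .and φ ψ => OccursF d φ ∨ OccursF d ψ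
  | .or φ ψ => OccursF d φ ∨ OccursF d ψ
  | .dia γ φ => OccursP d γ ∨ OccursF d φ
  | .box γ φ => OccursP d γ ∨ OccursF d φ
/-- The atomic program `d` occurs in a program (as `d` or `d⁻`). -/
def OccursP (d : ℕ) : Prog → Prop
  | .atom a => a = d
  | .conv a => a = d
  | .seq γ δ => OccursP d γ ∨ OccursP d δ
  | .choice γ δ => OccursP d γ ∨ OccursP d δ
  | .star γ => OccursP d γ
  | .test φ => OccursF d φ
end

/-- `(M, w, chn)` annotated-satisfies `(Γ, ann)`. -/
def AnnSat {W : Type} (M : Model W) (w : W)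
    (chn : Fml → Option (List (W × Fml))) (Γ : Set Fml) (ann : Fml → Option Fml) : Prop :=
  (∀ ψ ∈ Γ, Sat M w ψ) ∧
  (∀ ψ ∈ Γ, IsEv ψ → (chn ψ).isSome) ∧
  (∀ ψ σ, IsEv ψ → chn ψ = some σ →
    ModelChain M w ψ (ex ψ) σ ∧
    (∀ i, (h : i < σ.length) → ∀ χ, σ.get ⟨i, h⟩ = (w, χ) → IsEv χ → chn χ = some (σ.drop i)) ∧
    (∀ ψ', ann ψ = some ψ' → ∃ h : 1 < σ.length, σ.get ⟨1, h⟩ = (w, ψ')))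

/-- A structure `(W, R, L)`: a transition frame with a labelling function. -/
structure Str (W : Type) where
  R : ℕ → W → W → Prop
  L : W → Set Fml

/-- The relation interpreting a literal program in a structure. -/
def Str.Rl {W : Type} (H : Str W) : Lit → W → W → Prop
  | .atom a => H.R a
  | .conv a => fun w v => H.R a v w

/-- A chain step in a structure. -/
def SChainStep {W : Type} (H : Str W) : (W × Fml) → (W × Fml) → Prop
  | (w, .dia (.atom a) χ), (w', χ') => χ' = χ ∧ H.R a w w'
  | (w, .dia (.conv a) χ), (w', χ') => χ' = χ ∧ H.R a w' w
  | (w, χ), (w', χ') => Red χ χ' ∧ w' = w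

/-- `σ` is a fulfilling chain for `(H, w, φ, ψ)`. -/
def FulfillChain {W : Type} (H : Str W) (w : W) (φ ψ : Fml) (σ : List (W × Fml)) : Prop :=
  ∃ h : σ ≠ [], σ.head h = (w, φ) ∧ (σ.getLast h).2 = ψ ∧
    (∀ p ∈ σ, p.2 ∈ H.L p.1) ∧
    ∀ i, (h1 : i + 1 < σ.length) →
      SChainStep H (σ.get ⟨i, by omega⟩) (σ.get ⟨i + 1, h1⟩)

/-- The Hintikka conditions H1–H6. -/
def Hintikka {W : Type} (H : Str W) : Prop := ∀ w : W,
  -- H1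
  (∀ p, Fml.neg (.var p) ∈ H.L w → Fml.var p ∉ H.L w) ∧
  -- H2 (α-formulae)
  (∀ φ ψ, Fml.and φ ψ ∈ H.L w → φ ∈ H.L w ∧ ψ ∈ H.L w) ∧
  (∀ γ δ φ, Fml.box (.choice γ δ) φ ∈ H.L w → Fml.box γ φ ∈ H.L w ∧ Fml.box δ φ ∈ H.L w) ∧
  (∀ γ φ, Fml.box (.star γ) φ ∈ H.L w →
    φ ∈ H.L w ∧ Fml.box γ (.box (.star γ) φ) ∈ H.L w) ∧
  (∀ ψ φ, Fml.dia (.test ψ) φ ∈ H.L w → φ ∈ H.L w ∧ ψ ∈ H.L w) ∧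
  (∀ γ δ φ, Fml.dia (.seq γ δ) φ ∈ H.L w → Fml.dia γ (.dia δ φ) ∈ H.L w) ∧
  (∀ γ δ φ, Fml.box (.seq γ δ) φ ∈ H.L w → Fml.box γ (.box δ φ) ∈ H.L w) ∧
  -- H3 (β-formulae)
  (∀ φ ψ, Fml.or φ ψ ∈ H.L w → φ ∈ H.L w ∨ ψ ∈ H.L w) ∧
  (∀ γ δ φ, Fml.dia (.choice γ δ) φ ∈ H.L w → Fml.dia γ φ ∈ H.L w ∨ Fml.dia δ φ ∈ H.L w) ∧
  (∀ γ φ, Fml.dia (.star γ) φ ∈ H.L w →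
    φ ∈ H.L w ∨ Fml.dia γ (.dia (.star γ) φ) ∈ H.L w) ∧
  (∀ ψ φ, Fml.box (.test ψ) φ ∈ H.L w → φ ∈ H.L w ∨ nnfNeg ψ ∈ H.L w) ∧
  -- H4 and H5
  (∀ l : Lit, ∀ φ, Fml.dia l.toProg φ ∈ H.L w → ∃ v, H.Rl l w v ∧ φ ∈ H.L v) ∧
  (∀ l : Lit, ∀ φ, Fml.box l.toProg φ ∈ H.L w → ∀ v, H.Rl l w v → φ ∈ H.L v) ∧
  -- H6
  (∀ γ φ, Fml.dia (.star γ) φ ∈ H.L w →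
    ∃ σ, FulfillChain H w (.dia (.star γ) φ) φ σ)

/-! ### Auxiliary measures -/

mutual
def mm : Fml → ℕ
  | .var _ => 1
  | .neg φ => 1 + mm φ
  | .and φ ψ => 1 + mm φ + mm ψ
  | .or φ ψ => 1 + mm φ + mm ψ
  | .dia γ φ => mmP γ + mm φ
  | .box γ φ => mmP γ + mm φ
def mmP : Prog → ℕ
  | .atom _ => 1
  | .conv _ => 1
  | .seq γ δ => 1 + mmP γ + mmP δ
  | .choice γ δ => 1 + mmP γ + mmP δ
  | .star γ => 1 + mmP γ
  | .test θ => 1 + 2 * mm θ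
end

mutual
def tb : Fml → ℕ
  | .var _ => 0
  | .neg φ => tb φ
  | .and φ ψ => max (tb φ) (tb ψ)
  | .or φ ψ => max (tb φ) (tb ψ)
  | .dia γ φ => max (tbP γ) (tb φ)
  | .box γ φ => max (tbP γ) (tb φ)
def tbP : Prog → ℕ
  | .atom _ => 0
  | .conv _ => 0
  | .seq γ δ => max (tbP γ) (tbP δ)
  | .choice γ δ => max (tbP γ) (tbP δ)
  | .star γ => tbP γ
  | .test θ => max (2 * mm θ) (tb θ)
end

mutual
theorem mm_pos : ∀ φ, 1 ≤ mm φ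
  | .var _ => le_refl 1
  | .neg φ => by simp [mm]
  | .and φ ψ => by simp [mm]; omega
  | .or φ ψ => by simp [mm]; omega
  | .dia γ φ => by have := mmP_pos γ; simp [mm]; omega
  | .box γ φ => by have := mmP_pos γ; simp [mm]; omega
theorem mmP_pos : ∀ γ, 1 ≤ mmP γ
  | .atom _ => le_refl 1
  | .conv _ => le_refl 1
  | .seq γ δ => by simp [mmP]; omega
  | .choice γ δ => by simp [mmP]; omega
  | .star γ => by simp [mmP]
  | .test θ => by simp [mmP]
end

mutual
theorem tb_lt_mm : ∀ φ, tb φ < mm φ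
  | .var _ => by simp [tb, mm]
  | .neg φ => by have := tb_lt_mm φ; simp [tb, mm]; omega
  | .and φ ψ => by have := tb_lt_mm φ; have := tb_lt_mm ψ; simp [tb, mm]; omega
  | .or φ ψ => by have := tb_lt_mm φ; have := tb_lt_mm ψ; simp [tb, mm]; omega
  | .dia γ φ => by
      have := tbP_lt_mmP γ; have := tb_lt_mm φ; simp [tb, mm]; omega
  | .box γ φ => by
      have := tbP_lt_mmP γ; have := tb_lt_mm φ; simp [tb, mm]; omega
theorem tbP_lt_mmP : ∀ γ, tbP γ < mmP γ
  | .atom _ => by simp [tbP, mmP]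
  | .conv _ => by simp [tbP, mmP]
  | .seq γ δ => by have := tbP_lt_mmP γ; have := tbP_lt_mmP δ; simp [tbP, mmP]; omega
  | .choice γ δ => by have := tbP_lt_mmP γ; have := tbP_lt_mmP δ; simp [tbP, mmP]; omega
  | .star γ => by have := tbP_lt_mmP γ; simp [tbP, mmP]; omega
  | .test θ => by have := tb_lt_mm θ; simp [tbP, mmP]; omega
end

mutual
theorem mm_nnfNeg_le : ∀ φ, mm (nnfNeg φ) ≤ 2 * mm φ
  | .var _ => by simp [nnfNeg, mm]
  | .neg φ => by have := mm_nnf_le φ; simp [nnfNeg, mm]; omega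
  | .and φ ψ => by have := mm_nnfNeg_le φ; have := mm_nnfNeg_le ψ; simp [nnfNeg, mm]; omega
  | .or φ ψ => by have := mm_nnfNeg_le φ; have := mm_nnfNeg_le ψ; simp [nnfNeg, mm]; omega
  | .dia γ φ => by have := mm_nnfNeg_le φ; have := mmP_pos γ; simp [nnfNeg, mm]; omega
  | .box γ φ => by have := mm_nnfNeg_le φ; have := mmP_pos γ; simp [nnfNeg, mm]; omega
theorem mm_nnf_le : ∀ φ, mm (nnf φ) ≤ 2 * mm φ
  | .var _ => by simp [nnf, mm]
  | .neg φ => by have := mm_nnfNeg_le φ; simp [nnf, mm]; omega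
  | .and φ ψ => by have := mm_nnf_le φ; have := mm_nnf_le ψ; simp [nnf, mm]; omega
  | .or φ ψ => by have := mm_nnf_le φ; have := mm_nnf_le ψ; simp [nnf, mm]; omega
  | .dia γ φ => by have := mm_nnf_le φ; have := mmP_pos γ; simp [nnf, mm]; omega
  | .box γ φ => by have := mm_nnf_le φ; have := mmP_pos γ; simp [nnf, mm]; omega
end

mutual
theorem isNNF_nnf : ∀ φ, IsNNF φ → IsNNF (nnf φ)
  | .var _, _ => trivial
  | .neg (.var _), _ => trivial
  | .and φ ψ, h => ⟨isNNF_nnf φ h.1, isNNF_nnf ψ h.2⟩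
  | .or φ ψ, h => ⟨isNNF_nnf φ h.1, isNNF_nnf ψ h.2⟩
  | .dia γ φ, h => ⟨h.1, isNNF_nnf φ h.2⟩
  | .box γ φ, h => ⟨h.1, isNNF_nnf φ h.2⟩
theorem isNNF_nnfNeg : ∀ φ, IsNNF φ → IsNNF (nnfNeg φ)
  | .var _, _ => trivial
  | .neg (.var _), _ => trivial
  | .and φ ψ, h => ⟨isNNF_nnfNeg φ h.1, isNNF_nnfNeg ψ h.2⟩
  | .or φ ψ, h => ⟨isNNF_nnfNeg φ h.1, isNNF_nnfNeg ψ h.2⟩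
  | .dia γ φ, h => ⟨h.1, isNNF_nnfNeg φ h.2⟩
  | .box γ φ, h => ⟨h.1, isNNF_nnfNeg φ h.2⟩
end

mutual
theorem sat_nnf {W : Type} (M : Model W) : ∀ φ w, Sat M w (nnf φ) ↔ Sat M w φ
  | .var _, w => Iff.rfl
  | .neg φ, w => by simp only [nnf, Sat, sat_nnfNeg M φ w]
  | .and φ ψ, w => by simp only [nnf, Sat, sat_nnf M φ w, sat_nnf M ψ w]
  | .or φ ψ, w => by simp only [nnf, Sat, sat_nnf M φ w, sat_nnf M ψ w]
  | .dia γ φ, w => by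
      simp only [nnf, Sat]
      exact exists_congr fun v => and_congr_right fun _ => sat_nnf M φ v
  | .box γ φ, w => by
      simp only [nnf, Sat]
      exact forall_congr' fun v => imp_congr_right fun _ => sat_nnf M φ v
theorem sat_nnfNeg {W : Type} (M : Model W) : ∀ φ w, Sat M w (nnfNeg φ) ↔ ¬ Sat M w φ
  | .var _, w => by simp only [nnfNeg, Sat]
  | .neg φ, w => by simp only [nnfNeg, Sat, sat_nnf M φ w, not_not]
  | .and φ ψ, w => by
      simp only [nnfNeg, Sat, sat_nnfNeg M φ w, sat_nnfNeg M ψ w]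
      tauto
  | .or φ ψ, w => by
      simp only [nnfNeg, Sat, sat_nnfNeg M φ w, sat_nnfNeg M ψ w]
      tauto
  | .dia γ φ, w => by
      simp only [nnfNeg, Sat]
      push_neg
      exact forall_congr' fun v => imp_congr_right fun _ => sat_nnfNeg M φ v
  | .box γ φ, w => by
      simp only [nnfNeg, Sat]
      push_neg
      exact exists_congr fun v => and_congr_right fun _ => sat_nnfNeg M φ v
end
/-! ### Red preservation and soundness -/

theorem red_nnf {χ χ' : Fml} (h : Red χ χ') (hn : IsNNF χ) : IsNNF χ' := by
  cases h with
  | seq γ δ χ => exact ⟨hn.1.1, hn.1.2, hn.2⟩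
  | choiceL γ δ χ => exact ⟨hn.1.1, hn.2⟩
  | choiceR γ δ χ => exact ⟨hn.1.2, hn.2⟩
  | star1 γ χ => exact hn.2
  | star2 γ χ => exact ⟨hn.1, hn.1, hn.2⟩
  | test ϕ χ => exact hn.2

theorem red_tb {χ χ' : Fml} (h : Red χ χ') : tb χ' ≤ tb χ := by
  cases h <;> simp [tb, tbP] <;> omega

theorem red_sound {W : Type} (M : Model W) {χ χ' : Fml} (h : Red χ χ') (u : W)
    (hside : ∀ θ χ₀, χ = .dia (.test θ) χ₀ → Sat M u θ)
    (h' : Sat M u χ') : Sat M u χ := by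
  cases h with
  | seq γ δ χ =>
    simp only [Sat, PRel] at h' ⊢
    obtain ⟨x, hx, y, hy, hs⟩ := h'
    exact ⟨y, ⟨x, hx, hy⟩, hs⟩
  | choiceL γ δ χ =>
    simp only [Sat, PRel] at h' ⊢
    obtain ⟨x, hx, hs⟩ := h'
    exact ⟨x, Or.inl hx, hs⟩
  | choiceR γ δ χ =>
    simp only [Sat, PRel] at h' ⊢
    obtain ⟨x, hx, hs⟩ := h'
    exact ⟨x, Or.inr hx, hs⟩
  | star1 γ χ =>
    simp only [Sat, PRel]
    exact ⟨u, Relation.ReflTransGen.refl, h'⟩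
  | star2 γ χ =>
    simp only [Sat, PRel] at h' ⊢
    obtain ⟨x, hx, y, hy, hs⟩ := h'
    exact ⟨y, Relation.ReflTransGen.head hx hy, hs⟩
  | test θ₁ χ₁ =>
    simp only [Sat, PRel]
    exact ⟨u, ⟨rfl, hside θ₁ _ rfl⟩, h'⟩

/-! ### Chain step analysis -/

theorem schainstep_elim {W : Type} (H : Str W) {p q : W × Fml} (h : SChainStep H p q) :
    (∃ a χ₀, p.2 = .dia (.atom a) χ₀ ∧ q.2 = χ₀ ∧ H.R a p.1 q.1) ∨
    (∃ a χ₀, p.2 = .dia (.conv a) χ₀ ∧ q.2 = χ₀ ∧ H.R a q.1 p.1) ∨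
    (Red p.2 q.2 ∧ q.1 = p.1) := by
  obtain ⟨u, χ⟩ := p; obtain ⟨u', χ'⟩ := q
  cases χ with
  | dia γ χ₀ =>
    cases γ with
    | atom a => exact Or.inl ⟨a, χ₀, rfl, h.1, h.2⟩
    | conv a => exact Or.inr (Or.inl ⟨a, χ₀, rfl, h.1, h.2⟩)
    | seq _ _ => exact Or.inr (Or.inr h)
    | choice _ _ => exact Or.inr (Or.inr h)
    | star _ => exact Or.inr (Or.inr h)
    | test _ => exact Or.inr (Or.inr h)
  | var _ => exact Or.inr (Or.inr h)
  | neg _ => exact Or.inr (Or.inr h)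
  | and _ _ => exact Or.inr (Or.inr h)
  | or _ _ => exact Or.inr (Or.inr h)
  | box _ _ => exact Or.inr (Or.inr h)

theorem step_inv {W : Type} (H : Str W) {p q : W × Fml} (h : SChainStep H p q)
    (hn : IsNNF p.2) : IsNNF q.2 ∧ tb q.2 ≤ tb p.2 := by
  rcases schainstep_elim H h with ⟨a, χ₀, h1, h2, _⟩ | ⟨a, χ₀, h1, h2, _⟩ | ⟨hred, _⟩
  · rw [h1] at hn; rw [h1, h2]; exact ⟨hn.2, by simp [tb]⟩
  · rw [h1] at hn; rw [h1, h2]; exact ⟨hn.2, by simp [tb]⟩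
  · exact ⟨red_nnf hred hn, red_tb hred⟩

/-! ### From a Hintikka structure to a model -/

def mkM {W : Type} (H : Str W) : Model W := ⟨H.R, fun p w => Fml.var p ∈ H.L w⟩

theorem boxMem {W : Type} {H : Str W} (hH : Hintikka H) {B : ℕ}
    (ih : ∀ χ u, mm χ < B → χ ∈ H.L u → IsNNF χ → Sat (mkM H) u χ) :
    ∀ (γ : Prog), tbP γ < B → IsNNFP γ → ∀ χ u v, Fml.box γ χ ∈ H.L u →
      PRel (mkM H) γ u v → χ ∈ H.L v
  | .atom a, _, _, χ, u, v, hm, hr =>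
      (hH u).2.2.2.2.2.2.2.2.2.2.2.2.1 (Lit.atom a) χ hm v hr
  | .conv a, _, _, χ, u, v, hm, hr =>
      (hH u).2.2.2.2.2.2.2.2.2.2.2.2.1 (Lit.conv a) χ hm v hr
  | .seq γ δ, hb, hn, χ, u, v, hm, hr => by
      simp only [PRel] at hr
      obtain ⟨x, hx1, hx2⟩ := hr
      have h1 : Fml.box γ (.box δ χ) ∈ H.L u :=
        (hH u).2.2.2.2.2.2.1 γ δ χ hm
      have h2 : Fml.box δ χ ∈ H.L x :=
        boxMem hH ih γ (by simp [tbP] at hb ⊢; omega) hn.1 _ _ _ h1 hx1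
      exact boxMem hH ih δ (by simp [tbP] at hb ⊢; omega) hn.2 _ _ _ h2 hx2
  | .choice γ δ, hb, hn, χ, u, v, hm, hr => by
      simp only [PRel] at hr
      have h1 := (hH u).2.2.1 γ δ χ hm
      rcases hr with hr | hr
      · exact boxMem hH ih γ (by simp [tbP] at hb ⊢; omega) hn.1 _ _ _ h1.1 hr
      · exact boxMem hH ih δ (by simp [tbP] at hb ⊢; omega) hn.2 _ _ _ h1.2 hr
  | .star γ, hb, hn, χ, u, v, hm, hr => by
      simp only [PRel] at hr
      have key : ∀ u, Relation.ReflTransGen (fun a b => PRel (mkM H) γ a b) u v →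
          Fml.box (.star γ) χ ∈ H.L u → χ ∈ H.L v := by
        intro u hrel
        induction hrel using Relation.ReflTransGen.head_induction_on with
        | refl => intro hm; exact ((hH v).2.2.2.1 γ χ hm).1
        | head hstep hrest ihh =>
          intro hm
          have h1 := ((hH _).2.2.2.1 γ χ hm).2
          exact ihh (boxMem hH ih γ (by simpa [tbP] using hb) hn _ _ _ h1 hstep)
      exact key u hr hm
  | .test θ, hb, hn, χ, u, v, hm, hr => by
      simp only [PRel] at hr
      obtain ⟨rfl, hs⟩ := hr
      rcases (hH u).2.2.2.2.2.2.2.2.2.2.1 θ χ hm with h | h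
      · exact h
      · have hb' : mm (nnfNeg θ) < B := by
          have := mm_nnfNeg_le θ; simp [tbP] at hb; omega
        have := ih (nnfNeg θ) u hb' h (isNNF_nnfNeg θ hn)
        exact absurd hs ((sat_nnfNeg (mkM H) θ u).mp this)
termination_by γ => sizeOf γ

theorem back_step {W : Type} {H : Str W} (hH : Hintikka H) {B t0 : ℕ}
    (ih : ∀ χ u, mm χ < B → χ ∈ H.L u → IsNNF χ → Sat (mkM H) u χ)
    {p q : W × Fml} (hstep : SChainStep H p q) (hL : p.2 ∈ H.L p.1)
    (hnnf : IsNNF p.2) (htb : tb p.2 ≤ t0) (ht : t0 < B)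
    (hq : Sat (mkM H) q.1 q.2) : Sat (mkM H) p.1 p.2 := by
  rcases schainstep_elim H hstep with ⟨a, χ₀, h1, h2, h3⟩ | ⟨a, χ₀, h1, h2, h3⟩ | ⟨hred, heq⟩
  · rw [h1]
    simp only [Sat, PRel]
    exact ⟨q.1, h3, h2 ▸ hq⟩
  · rw [h1]
    simp only [Sat, PRel]
    exact ⟨q.1, h3, h2 ▸ hq⟩
  · refine red_sound (mkM H) hred p.1 ?_ (heq ▸ hq)
    intro θ χ₀ hpe
    have hm := (hH p.1).2.2.2.2.1 θ χ₀ (hpe ▸ hL)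
    have hb' : mm θ < B := by
      rw [hpe] at htb
      simp [tb, tbP] at htb
      omega
    have hnθ : IsNNF θ := by rw [hpe] at hnnf; exact hnnf.1
    exact ih θ p.1 hb' hm.2 hnθ

theorem chain_all {α : Type*} {R : α → α → Prop} {P : α → Prop}
    (pres : ∀ p q, R p q → P p → P q) :
    ∀ σ : List α, List.Chain' R σ → ∀ p₀, σ.head? = some p₀ → P p₀ → ∀ q ∈ σ, P q := by
  intro σ
  induction σ with
  | nil => intro _ p₀ h; simp at h
  | cons p rest ihr =>
    intro hch p₀ hh hP q hq
    simp only [List.head?_cons, Option.some.injEq] at hh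
    subst hh
    rcases List.mem_cons.mp hq with rfl | hq'
    · exact hP
    · cases rest with
      | nil => simp at hq'
      | cons r t =>
        have hc := List.isChain_cons_cons.mp hch
        exact ihr hc.2 r rfl (pres _ _ hc.1 hP) q hq'

theorem chain_sat {W : Type} {H : Str W} (hH : Hintikka H) {B t0 : ℕ} (ht : t0 < B)
    (ih : ∀ χ u, mm χ < B → χ ∈ H.L u → IsNNF χ → Sat (mkM H) u χ) :
    ∀ σ : List (W × Fml), List.Chain' (SChainStep H) σ →
      (∀ p ∈ σ, p.2 ∈ H.L p.1 ∧ IsNNF p.2 ∧ tb p.2 ≤ t0) →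
      ∀ q, σ.getLast? = some q → Sat (mkM H) q.1 q.2 →
      ∀ p₀, σ.head? = some p₀ → Sat (mkM H) p₀.1 p₀.2 := by
  intro σ
  induction σ with
  | nil => intro _ _ _ _ _ p₀ h; simp at h
  | cons p rest ihr =>
    intro hch hinv q hlast hq p₀ hh
    simp only [List.head?_cons, Option.some.injEq] at hh
    subst hh
    cases rest with
    | nil =>
      simp only [List.getLast?_singleton, Option.some.injEq] at hlast
      subst hlast; exact hq
    | cons r t =>
      have hc := List.isChain_cons_cons.mp hch
      have hlast' : (r :: t).getLast? = some q := by
        rw [← hlast]; exact (List.getLast?_cons_cons ..).symm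
      have hsatr := ihr hc.2 (fun p hp => hinv p (List.mem_cons_of_mem _ hp)) q hlast' hq r rfl
      have hinvp := hinv p (List.mem_cons_self ..)
      exact back_step hH ih hc.1 hinvp.1 hinvp.2.1 hinvp.2.2 ht hsatr

theorem diaProp {W : Type} {H : Str W} (hH : Hintikka H) :
    ∀ (γ : Prog) (ψ : Fml) (w : W), Fml.dia γ ψ ∈ H.L w → IsNNFP γ → IsNNF ψ →
      (∀ χ u, mm χ < mm (.dia γ ψ) → χ ∈ H.L u → IsNNF χ → Sat (mkM H) u χ) →
      Sat (mkM H) w (.dia γ ψ)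
  | .atom a, ψ, w, hm, hnγ, hnψ, ih => by
      obtain ⟨v, hRl, hψ⟩ := (hH w).2.2.2.2.2.2.2.2.2.2.2.1 (Lit.atom a) ψ hm
      exact ⟨v, hRl, ih ψ v (by simp [mm, mmP]) hψ hnψ⟩
  | .conv a, ψ, w, hm, hnγ, hnψ, ih => by
      obtain ⟨v, hRl, hψ⟩ := (hH w).2.2.2.2.2.2.2.2.2.2.2.1 (Lit.conv a) ψ hm
      exact ⟨v, hRl, ih ψ v (by simp [mm, mmP]) hψ hnψ⟩
  | .seq γ δ, ψ, w, hm, hnγ, hnψ, ih => by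
      have h1 : Fml.dia γ (.dia δ ψ) ∈ H.L w := (hH w).2.2.2.2.2.1 γ δ ψ hm
      have h2 := diaProp hH γ (.dia δ ψ) w h1 hnγ.1 ⟨hnγ.2, hnψ⟩
        (fun χ u hlt => ih χ u (by simp [mm, mmP] at hlt ⊢; omega))
      simp only [Sat, PRel] at h2 ⊢
      obtain ⟨x, hx, y, hy, hs⟩ := h2
      exact ⟨y, ⟨x, hx, hy⟩, hs⟩
  | .choice γ δ, ψ, w, hm, hnγ, hnψ, ih => by
      rcases (hH w).2.2.2.2.2.2.2.2.1 γ δ ψ hm with h | h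
      · have h2 := diaProp hH γ ψ w h hnγ.1 hnψ
          (fun χ u hlt => ih χ u (by simp [mm, mmP] at hlt ⊢; omega))
        simp only [Sat, PRel] at h2 ⊢
        obtain ⟨x, hx, hs⟩ := h2
        exact ⟨x, Or.inl hx, hs⟩
      · have h2 := diaProp hH δ ψ w h hnγ.2 hnψ
          (fun χ u hlt => ih χ u (by simp [mm, mmP] at hlt ⊢; omega))
        simp only [Sat, PRel] at h2 ⊢
        obtain ⟨x, hx, hs⟩ := h2
        exact ⟨x, Or.inr hx, hs⟩
  | .test θ, ψ, w, hm, hnγ, hnψ, ih => by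
      have h1 := (hH w).2.2.2.2.1 θ ψ hm
      simp only [Sat, PRel]
      have hmθ := mm_pos θ; have hmψ := mm_pos ψ
      exact ⟨w, ⟨rfl, ih θ w (by simp only [mm, mmP]; omega) h1.2 hnγ⟩,
        ih ψ w (by simp only [mm, mmP]; omega) h1.1 hnψ⟩
  | .star γ, ψ, w, hm, hnγ, hnψ, ih => by
      obtain ⟨σ, hne, hhead, hlast, hmem, hsteps⟩ :=
        (hH w).2.2.2.2.2.2.2.2.2.2.2.2.2 γ ψ hm
      have hch : List.Chain' (SChainStep H) σ := by
        apply List.isChain_iff_getElem.mpr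
        intro i hi
        exact hsteps i (by omega)
      have hinv : ∀ p ∈ σ, IsNNF p.2 ∧ tb p.2 ≤ tb (.dia (.star γ) ψ) := by
        refine chain_all (fun p q hst hp => ?_) σ hch (w, .dia (.star γ) ψ)
          (by rw [List.head?_eq_head hne, hhead]) ⟨⟨hnγ, hnψ⟩, le_refl _⟩
        have := step_inv H hst hp.1
        exact ⟨this.1, le_trans this.2 hp.2⟩
      have hq : Sat (mkM H) (σ.getLast hne).1 (σ.getLast hne).2 := by
        rw [hlast]
        exact ih ψ _ (by have := mmP_pos γ; simp only [mm, mmP]; omega)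
          (hlast ▸ hmem _ (List.getLast_mem hne)) hnψ
      exact chain_sat hH (tb_lt_mm (.dia (.star γ) ψ))
        (fun χ u hlt => ih χ u hlt) σ hch
        (fun p hp => ⟨hmem p hp, (hinv p hp).1, (hinv p hp).2⟩)
        (σ.getLast hne) (List.getLast?_eq_getLast hne) hq
        (w, .dia (.star γ) ψ) (by rw [List.head?_eq_head hne, hhead])
termination_by γ => sizeOf γ

theorem truthLemma {W : Type} {H : Str W} (hH : Hintikka H) :
    ∀ (n : ℕ) (χ : Fml) (w : W), mm χ ≤ n → χ ∈ H.L w → IsNNF χ → Sat (mkM H) w χ := by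
  intro n
  induction n with
  | zero => intro χ w h; have := mm_pos χ; omega
  | succ n ihn =>
    intro χ w hle hL hnnf
    match χ, hnnf with
    | .var p, _ => exact hL
    | .neg (.var p), _ => exact (hH w).1 p hL
    | .and φ ψ, hnnf =>
      have h := (hH w).2.1 φ ψ hL
      have h1 := mm_pos φ; have h2 := mm_pos ψ
      simp only [mm] at hle
      exact ⟨ihn φ w (by omega) h.1 hnnf.1, ihn ψ w (by omega) h.2 hnnf.2⟩
    | .or φ ψ, hnnf =>
      have h1 := mm_pos φ; have h2 := mm_pos ψ
      simp only [mm] at hle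
      rcases (hH w).2.2.2.2.2.2.2.1 φ ψ hL with h | h
      · exact Or.inl (ihn φ w (by omega) h hnnf.1)
      · exact Or.inr (ihn ψ w (by omega) h hnnf.2)
    | .dia γ ψ, hnnf =>
      exact diaProp hH γ ψ w hL hnnf.1 hnnf.2
        (fun χ' u hlt hL' hn' => ihn χ' u (by omega) hL' hn')
    | .box γ ψ, hnnf =>
      simp only [Sat]
      intro v hrel
      have hb : tbP γ < mm (.box γ ψ) := by
        have := tbP_lt_mmP γ; have := mm_pos ψ; simp [mm]; omega
      have hmem := boxMem hH (B := mm (.box γ ψ))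
        (fun χ' u hlt hL' hn' => ihn χ' u (by omega) hL' hn')
        γ hb hnnf.1 ψ w v hL hrel
      have := mmP_pos γ
      exact ihn ψ v (by simp [mm] at hle; omega) hmem hnnf.2
/-! ### From a model to a Hintikka structure -/

def mkH {W : Type} (M : Model W) : Str W := ⟨M.R, fun w => {ψ | Sat M w ψ}⟩

theorem glue {α : Type*} {R : α → α → Prop} {σ1 σ2 : List α} (h1 : List.Chain' R σ1)
    (h2 : List.Chain' R σ2) (hne1 : σ1 ≠ []) (hne2 : σ2 ≠ [])
    (hj : σ1.getLast? = σ2.head?) :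
    List.Chain' R (σ1 ++ σ2.tail) ∧ (σ1 ++ σ2.tail).head? = σ1.head? ∧
    (σ1 ++ σ2.tail).getLast? = σ2.getLast? ∧
    ∀ p ∈ σ1 ++ σ2.tail, p ∈ σ1 ∨ p ∈ σ2 := by
  obtain ⟨q, t, rfl⟩ : ∃ q t, σ2 = q :: t := by
    cases σ2 with
    | nil => exact absurd rfl hne2
    | cons q t => exact ⟨q, t, rfl⟩
  have hc := List.isChain_cons.mp h2
  refine ⟨?_, ?_, ?_, ?_⟩
  · apply List.isChain_append.mpr
    refine ⟨h1, hc.2, ?_⟩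
    intro x hx y hy
    rw [hj] at hx
    simp only [List.head?_cons, Option.mem_def, Option.some.injEq] at hx
    subst hx
    exact hc.1 y hy
  · rw [List.head?_append]
    cases σ1 with
    | nil => exact absurd rfl hne1
    | cons a l => simp
  · rw [List.getLast?_append]
    cases t with
    | nil => simpa using hj
    | cons r s =>
      simp only [List.tail_cons, List.getLast?_cons_cons]
      obtain ⟨x, hx⟩ := Option.isSome_iff_exists.mp (List.getLast?_isSome.mpr (List.cons_ne_nil r s))
      rw [hx]; rfl
  · intro p hp
    rcases List.mem_append.mp hp with h | h
    · exact Or.inl h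
    · exact Or.inr (List.mem_cons_of_mem _ h)

theorem prepend {α : Type*} {R : α → α → Prop} {p₀ p : α} {σ : List α}
    (h : List.Chain' R σ) (hh : σ.head? = some p) (hst : R p₀ p) :
    List.Chain' R (p₀ :: σ) ∧ (p₀ :: σ).getLast? = σ.getLast? := by
  constructor
  · refine List.isChain_cons.mpr ⟨?_, h⟩
    intro y hy
    rw [hh] at hy
    simp only [Option.mem_def, Option.some.injEq] at hy
    subst hy
    exact hst
  · cases σ with
    | nil => simp at hh
    | cons a l => exact List.getLast?_cons_cons ..

theorem cc {W : Type} (M : Model W) :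
    ∀ (γ : Prog) (χ : Fml) (w v : W), PRel M γ w v → Sat M v χ →
      ∃ σ : List (W × Fml), List.Chain' (SChainStep (mkH M)) σ ∧
        σ.head? = some (w, .dia γ χ) ∧ σ.getLast? = some (v, χ) ∧
        ∀ p ∈ σ, Sat M p.1 p.2
  | .atom a, χ, w, v, hr, hs => by
      simp only [PRel] at hr
      refine ⟨[(w, .dia (.atom a) χ), (v, χ)], ?_, rfl, rfl, ?_⟩
      · exact List.isChain_cons_cons.mpr ⟨⟨rfl, hr⟩, List.isChain_singleton _⟩
      · rintro p hp
        rcases List.mem_cons.mp hp with rfl | hp'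
        · exact ⟨v, hr, hs⟩
        rcases List.mem_cons.mp hp' with rfl | hp''
        · exact hs
        · simp at hp''
  | .conv a, χ, w, v, hr, hs => by
      simp only [PRel] at hr
      refine ⟨[(w, .dia (.conv a) χ), (v, χ)], ?_, rfl, rfl, ?_⟩
      · exact List.isChain_cons_cons.mpr ⟨⟨rfl, hr⟩, List.isChain_singleton _⟩
      · rintro p hp
        rcases List.mem_cons.mp hp with rfl | hp'
        · exact ⟨v, hr, hs⟩
        rcases List.mem_cons.mp hp' with rfl | hp''
        · exact hs
        · simp at hp''
  | .seq γ δ, χ, w, v, hr, hs => by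
      simp only [PRel] at hr
      obtain ⟨x, hx1, hx2⟩ := hr
      obtain ⟨σ1, hc1, hh1, hl1, hm1⟩ :=
        cc M γ (.dia δ χ) w x hx1 ⟨v, hx2, hs⟩
      obtain ⟨σ2, hc2, hh2, hl2, hm2⟩ := cc M δ χ x v hx2 hs
      have hne1 : σ1 ≠ [] := by intro h; rw [h] at hh1; simp at hh1
      have hne2 : σ2 ≠ [] := by intro h; rw [h] at hh2; simp at hh2
      obtain ⟨gc, gh, gl, gm⟩ := glue hc1 hc2 hne1 hne2 (by rw [hl1, hh2])
      obtain ⟨pc, pl⟩ := prepend gc (by rw [gh, hh1])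
        (show SChainStep (mkH M) (w, .dia (.seq γ δ) χ) (w, .dia γ (.dia δ χ)) from
          ⟨Red.seq γ δ χ, rfl⟩)
      refine ⟨(w, .dia (.seq γ δ) χ) :: (σ1 ++ σ2.tail), pc, rfl, ?_, ?_⟩
      · rw [pl, gl, hl2]
      · rintro p hp
        rcases List.mem_cons.mp hp with rfl | hp'
        · exact ⟨v, ⟨x, hx1, hx2⟩, hs⟩
        · rcases gm p hp' with h | h
          · exact hm1 p h
          · exact hm2 p h
  | .choice γ δ, χ, w, v, hr, hs => by
      simp only [PRel] at hr
      rcases hr with hr | hr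
      · obtain ⟨σ1, hc1, hh1, hl1, hm1⟩ := cc M γ χ w v hr hs
        obtain ⟨pc, pl⟩ := prepend hc1 hh1
          (show SChainStep (mkH M) (w, .dia (.choice γ δ) χ) (w, .dia γ χ) from
            ⟨Red.choiceL γ δ χ, rfl⟩)
        refine ⟨(w, .dia (.choice γ δ) χ) :: σ1, pc, rfl, by rw [pl, hl1], ?_⟩
        rintro p hp
        rcases List.mem_cons.mp hp with rfl | hp'
        · exact ⟨v, Or.inl hr, hs⟩
        · exact hm1 p hp'
      · obtain ⟨σ1, hc1, hh1, hl1, hm1⟩ := cc M δ χ w v hr hs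
        obtain ⟨pc, pl⟩ := prepend hc1 hh1
          (show SChainStep (mkH M) (w, .dia (.choice γ δ) χ) (w, .dia δ χ) from
            ⟨Red.choiceR γ δ χ, rfl⟩)
        refine ⟨(w, .dia (.choice γ δ) χ) :: σ1, pc, rfl, by rw [pl, hl1], ?_⟩
        rintro p hp
        rcases List.mem_cons.mp hp with rfl | hp'
        · exact ⟨v, Or.inr hr, hs⟩
        · exact hm1 p hp'
  | .star γ, χ, w, v, hr, hs => by
      simp only [PRel] at hr
      induction hr using Relation.ReflTransGen.head_induction_on with
      | refl =>
        refine ⟨[(v, .dia (.star γ) χ), (v, χ)], ?_, rfl, rfl, ?_⟩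
        · exact List.isChain_cons_cons.mpr ⟨⟨Red.star1 γ χ, rfl⟩, List.isChain_singleton _⟩
        · rintro p hp
          rcases List.mem_cons.mp hp with rfl | hp'
          · exact ⟨v, Relation.ReflTransGen.refl, hs⟩
          rcases List.mem_cons.mp hp' with rfl | hp''
          · exact hs
          · simp at hp''
      | @head w x hstep hrest ihh =>
        obtain ⟨σ2, hc2, hh2, hl2, hm2⟩ := ihh
        obtain ⟨σ1, hc1, hh1, hl1, hm1⟩ :=
          cc M γ (.dia (.star γ) χ) w x hstep ⟨v, hrest, hs⟩
        have hne1 : σ1 ≠ [] := by intro h; rw [h] at hh1; simp at hh1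
        have hne2 : σ2 ≠ [] := by intro h; rw [h] at hh2; simp at hh2
        obtain ⟨gc, gh, gl, gm⟩ := glue hc1 hc2 hne1 hne2 (by rw [hl1, hh2])
        obtain ⟨pc, pl⟩ := prepend gc (by rw [gh, hh1])
          (show SChainStep (mkH M) (w, .dia (.star γ) χ) (w, .dia γ (.dia (.star γ) χ)) from
            ⟨Red.star2 γ χ, rfl⟩)
        refine ⟨(w, .dia (.star γ) χ) :: (σ1 ++ σ2.tail), pc, rfl, ?_, ?_⟩
        · rw [pl, gl, hl2]
        · rintro p hp
          rcases List.mem_cons.mp hp with rfl | hp'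
          · exact ⟨v, Relation.ReflTransGen.head hstep hrest, hs⟩
          · rcases gm p hp' with h | h
            · exact hm1 p h
            · exact hm2 p h
  | .test θ, χ, w, v, hr, hs => by
      simp only [PRel] at hr
      obtain ⟨rfl, hθ⟩ := hr
      refine ⟨[(w, .dia (.test θ) χ), (w, χ)], ?_, rfl, rfl, ?_⟩
      · exact List.isChain_cons_cons.mpr ⟨⟨Red.test θ χ, rfl⟩, List.isChain_singleton _⟩
      · rintro p hp
        rcases List.mem_cons.mp hp with rfl | hp'
        · exact ⟨w, ⟨rfl, hθ⟩, hs⟩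
        rcases List.mem_cons.mp hp' with rfl | hp''
        · exact hs
        · simp at hp''
termination_by γ => sizeOf γ

theorem mkH_hintikka {W : Type} (M : Model W) : Hintikka (mkH M) := by
  intro w
  refine ⟨?_, ?_, ?_, ?_, ?_, ?_, ?_, ?_, ?_, ?_, ?_, ?_, ?_, ?_⟩
  · intro p h hc
    exact h hc
  · intro φ ψ h
    exact h
  · intro γ δ φ h
    exact ⟨fun v hv => h v (Or.inl hv), fun v hv => h v (Or.inr hv)⟩
  · intro γ φ h
    exact ⟨h w Relation.ReflTransGen.refl,
      fun x hx v hv => h v (Relation.ReflTransGen.head hx hv)⟩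
  · intro ψ φ h
    obtain ⟨v, ⟨heq, hψ⟩, hφ⟩ := h
    subst heq
    exact ⟨hφ, hψ⟩
  · intro γ δ φ h
    obtain ⟨v, ⟨x, hx, hv⟩, hφ⟩ := h
    exact ⟨x, hx, v, hv, hφ⟩
  · intro γ δ φ h
    exact fun x hx y hy => h y ⟨x, hx, hy⟩
  · intro φ ψ h
    exact h
  · intro γ δ φ h
    obtain ⟨v, hv | hv, hφ⟩ := h
    · exact Or.inl ⟨v, hv, hφ⟩
    · exact Or.inr ⟨v, hv, hφ⟩
  · intro γ φ h
    obtain ⟨v, hv, hφ⟩ := h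
    rcases Relation.ReflTransGen.cases_head hv with rfl | ⟨c, hc, hrest⟩
    · exact Or.inl hφ
    · exact Or.inr ⟨c, hc, v, hrest, hφ⟩
  · intro ψ φ h
    by_cases hψ : Sat M w ψ
    · exact Or.inl (h w ⟨rfl, hψ⟩)
    · exact Or.inr ((sat_nnfNeg M ψ w).mpr hψ)
  · intro l φ h
    cases l with
    | atom a =>
      obtain ⟨v, hv, hφ⟩ := h
      exact ⟨v, hv, hφ⟩
    | conv a =>
      obtain ⟨v, hv, hφ⟩ := h
      exact ⟨v, hv, hφ⟩
  · intro l φ h v hv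
    cases l with
    | atom a => exact h v hv
    | conv a => exact h v hv
  · intro γ φ h
    obtain ⟨v, hv, hφ⟩ := h
    obtain ⟨σ, hch, hh, hl, hm⟩ := cc M (.star γ) φ w v hv hφ
    have hne : σ ≠ [] := by intro h0; rw [h0] at hh; simp at hh
    refine ⟨σ, hne, ?_, ?_, ?_, ?_⟩
    · have := List.head?_eq_head hne
      rw [hh] at this
      exact (Option.some.inj this).symm
    · have := List.getLast?_eq_getLast hne
      rw [hl] at this
      rw [← Option.some.inj this]
    · exact fun p hp => hm p hp
    · intro i h1
      exact List.isChain_iff_getElem.mp hch i (by omega)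
/-- an NNF formula is satisfiable iff there is a Hintikka structure for it. -/
theorem satisfiable_iff_hintikka (φ : Fml) (hφ : IsNNF φ) :
    (∃ (W : Type) (M : Model W) (w : W), Sat M w φ) ↔
    (∃ (W : Type) (H : Str W) (v : W), Hintikka H ∧ φ ∈ H.L v) := by
  constructor
  · rintro ⟨W, M, w, hs⟩
    exact ⟨W, mkH M, w, mkH_hintikka M, hs⟩
  · rintro ⟨W, H, v, hH, hv⟩
    exact ⟨W, mkM H, v, truthLemma hH (mm φ) φ v le_rfl hv hφ⟩
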